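/- For every integer n ≥ 3 and all homogeneous elements v₁,…,v_n ∈ V, the following identity holds: Φ_n(v₁,…,v_n) := ∑_{k+l=n+1, k,l≥2} ∑_{j=0}^{k−1} (−1)^r λ_k(v₁,…,v_j, λ_l(v_{j+1},…,v_{j+l}), v_{j+l+1},…,v_n) = 0, where r = l(|v₁|+⋯+|v_j|) + j(l−1) + (k−1)l (signs taken according to r mod 2, with the empty parity sum for j = 0 equal to 0). -/

import Mathlib

open Finset

/-- The sign `(-1)^x` for a parity `x : ZMod 2`, valued in a ring `A`. -/
def sgn {A : Type*} [Ring A] (x : ZMod 2) : A := (-1 : A) ^ x.val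

/-- The sum of the first `j` parities, `|v₁| + ⋯ + |v_j|`. -/
def psum (p : ℕ → ZMod 2) (j : ℕ) : ZMod 2 := ∑ i ∈ Finset.range j, p i

/-- `Qλ_n`, with the convention `Qλ₁ := -Id`. -/
def Qlam {A : Type*} [Neg A] (Q : A → A)
    (lam : ℕ → (ℕ → A) → (ℕ → ZMod 2) → A) :
    ℕ → (ℕ → A) → (ℕ → ZMod 2) → A
  | 1, v, _ => -(v 0)
  | n, v, p => Q (lam n v p)

/-- The tuple obtained from `v` by replacing the block `v_{j+1}, …, v_{j+l}`
of length `l` by the single element `x` (0-indexed: `x` sits at slot `j`). -/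
def insE {A : Type*} (v : ℕ → A) (j l : ℕ) (x : A) : ℕ → A :=
  fun i => if i < j then v i else if i = j then x else v (i + l - 1)

/-- The corresponding tuple of parities, where the inserted element has parity `q`. -/
def insP (p : ℕ → ZMod 2) (j l : ℕ) (q : ZMod 2) : ℕ → ZMod 2 :=
  fun i => if i < j then p i else if i = j then q else p (i + l - 1)

/-- `Φ_n(v₁,…,v_n) = ∑_{k+l=n+1, k,l≥2} ∑_{j=0}^{k-1} (-1)^r
λ_k(v₁,…,v_j, λ_l(v_{j+1},…,v_{j+l}), v_{j+l+1},…,v_n)`,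
with `r = l(|v₁|+⋯+|v_j|) + j(l-1) + (k-1)l`; the inserted element
`λ_l(v_{j+1},…,v_{j+l})` is homogeneous of parity `l + |v_{j+1}| + ⋯ + |v_{j+l}|`. -/
def Phi {A : Type*} [Ring A] (lam : ℕ → (ℕ → A) → (ℕ → ZMod 2) → A)
    (n : ℕ) (v : ℕ → A) (p : ℕ → ZMod 2) : A :=
  ∑ k ∈ Finset.Icc 2 (n - 1), ∑ j ∈ Finset.range k,
    sgn (((n + 1 - k : ℕ) : ZMod 2) * psum p j
        + (j : ZMod 2) * (((n + 1 - k : ℕ) : ZMod 2) - 1)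
        + ((k : ZMod 2) - 1) * ((n + 1 - k : ℕ) : ZMod 2)) *
      lam k
        (insE v j (n + 1 - k)
          (lam (n + 1 - k) (fun i => v (j + i)) (fun i => p (j + i))))
        (insP p j (n + 1 - k)
          (((n + 1 - k : ℕ) : ZMod 2) + ∑ i ∈ Finset.range (n + 1 - k), p (j + i)))

section Aux
variable {A : Type*} [Ring A]

lemma zmod2_cases : ∀ x : ZMod 2, x = 0 ∨ x = 1 := by decide
lemma sgn_zero : (sgn 0 : A) = 1 := by rw [sgn, show (0 : ZMod 2).val = 0 from rfl, pow_zero]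
lemma sgn_one : (sgn 1 : A) = -1 := by rw [sgn, show (1 : ZMod 2).val = 1 from rfl, pow_one]
lemma sgn_cases (x : ZMod 2) : (sgn x : A) = 1 ∨ (sgn x : A) = -1 := by
  rcases zmod2_cases x with h | h <;> subst h
  · exact Or.inl sgn_zero
  · exact Or.inr sgn_one
lemma sgn_add (x y : ZMod 2) : (sgn (x + y) : A) = sgn x * sgn y := by
  rcases zmod2_cases x with h | h <;> rcases zmod2_cases y with h' | h' <;>
    subst h <;> subst h' <;>
    simp only [show (0:ZMod 2)+0 = 0 by decide, show (0:ZMod 2)+1 = 1 by decide,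
      show (1:ZMod 2)+0 = 1 by decide, show (1:ZMod 2)+1 = 0 by decide,
      sgn_zero, sgn_one] <;> norm_num

variable (Q : A → A) (lam : ℕ → (ℕ → A) → (ℕ → ZMod 2) → A)

lemma Qlam_one (v : ℕ → A) (p : ℕ → ZMod 2) : Qlam Q lam 1 v p = -(v 0) := rfl

lemma Qlam_ge2 (m : ℕ) (hm : 2 ≤ m) (v : ℕ → A) (p : ℕ → ZMod 2) :
    Qlam Q lam m v p = Q (lam m v p) := by
  match m, hm with
  | (n+2), _ => rfl

lemma psum_add (p : ℕ → ZMod 2) (a b : ℕ) :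
    psum p (a + b) = psum p a + ∑ i ∈ Finset.range b, p (a + i) := by
  simp [psum, Finset.sum_range_add]

lemma psum_ext {p p' : ℕ → ZMod 2} (k : ℕ) (h : ∀ i < k, p i = p' i) :
    psum p k = psum p' k :=
  Finset.sum_congr rfl fun i hi => h i (Finset.mem_range.mp hi)

variable (hlam2 : ∀ (v : ℕ → A) (p : ℕ → ZMod 2), lam 2 v p = v 0 * v 1)
variable (hlamrec : ∀ n, 3 ≤ n → ∀ (v : ℕ → A) (p : ℕ → ZMod 2),
      lam n v p =
        - ∑ k ∈ Finset.Icc 1 (n - 1),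
            sgn ((k : ZMod 2) + (((n - k : ℕ) : ZMod 2) - 1) * psum p k) *
              (Qlam Q lam k v p *
                Qlam Q lam (n - k) (fun i => v (k + i)) (fun i => p (k + i))))

include hlam2 hlamrec in
lemma lam_ext : ∀ m, 2 ≤ m → ∀ (v v' : ℕ → A) (p p' : ℕ → ZMod 2),
    (∀ i < m, v i = v' i) → (∀ i < m, p i = p' i) → lam m v p = lam m v' p' := by
  intro m
  induction m using Nat.strong_induction_on with
  | _ m IH =>
    intro hm v v' p p' hv hp
    rcases lt_or_ge m 3 with h3 | h3
    · have hm2 : m = 2 := by omega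
      subst hm2
      rw [hlam2, hlam2, hv 0 (by omega), hv 1 (by omega)]
    · have hQl : ∀ a, 1 ≤ a → a < m → ∀ (w w' : ℕ → A) (q q' : ℕ → ZMod 2),
          (∀ i < a, w i = w' i) → (∀ i < a, q i = q' i) →
          Qlam Q lam a w q = Qlam Q lam a w' q' := by
        intro a ha ham w w' q q' hw hq
        rcases eq_or_lt_of_le ha with h1 | h1
        · rw [← h1, Qlam_one, Qlam_one, hw 0 (by omega)]
        · rw [Qlam_ge2 Q lam a h1, Qlam_ge2 Q lam a h1]
          exact congrArg Q (IH a ham h1 w w' q q' hw hq)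
      rw [hlamrec m h3, hlamrec m h3]
      congr 1
      apply Finset.sum_congr rfl
      intro k hk
      simp only [Finset.mem_Icc] at hk
      rw [psum_ext k (fun i hi => hp i (by omega))]
      congr 1
      rw [hQl k hk.1 (by omega) v v' p p' (fun i hi => hv i (by omega))
            (fun i hi => hp i (by omega)),
          hQl (m - k) (by omega) (by omega) _ _ _ _
            (fun i hi => hv (k + i) (by omega)) (fun i hi => hp (k + i) (by omega))]

include hlam2 hlamrec in
lemma Qlam_ext : ∀ a, 1 ≤ a → ∀ (w w' : ℕ → A) (q q' : ℕ → ZMod 2),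
    (∀ i < a, w i = w' i) → (∀ i < a, q i = q' i) →
    Qlam Q lam a w q = Qlam Q lam a w' q' := by
  intro a ha w w' q q' hw hq
  rcases eq_or_lt_of_le ha with h1 | h1
  · rw [← h1, Qlam_one, Qlam_one, hw 0 (by omega)]
  · rw [Qlam_ge2 Q lam a h1, Qlam_ge2 Q lam a h1]
    exact congrArg Q (lam_ext Q lam hlam2 hlamrec a h1 w w' q q' hw hq)

include hlam2 hlamrec in
lemma lam_rec2 (m : ℕ) (hm : 2 ≤ m) (v : ℕ → A) (p : ℕ → ZMod 2) :
    lam m v p =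
      - ∑ k ∈ Finset.Icc 1 (m - 1),
          sgn ((k : ZMod 2) + (((m - k : ℕ) : ZMod 2) - 1) * psum p k) *
            (Qlam Q lam k v p *
              Qlam Q lam (m - k) (fun i => v (k + i)) (fun i => p (k + i))) := by
  rcases lt_or_ge m 3 with h3 | h3
  · have hm2 : m = 2 := by omega
    subst hm2
    rw [hlam2]
    norm_num
    rw [Qlam_one, Qlam_one]
    norm_num [show ((1 : ZMod 2) - 1) = 0 by decide, sgn_one]
  · exact hlamrec m h3 v p

lemma psum_insP_le (p : ℕ → ZMod 2) (j l a : ℕ) (q : ZMod 2) (h : a ≤ j) :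
    psum (insP p j l q) a = psum p a :=
  psum_ext a fun i hi => by simp [insP, show i < j by omega]

lemma psum_insP_gt (p : ℕ → ZMod 2) (j l a : ℕ) (hj : j < a) (hl : 1 ≤ l) :
    psum (insP p j l ((l : ZMod 2) + ∑ i ∈ Finset.range l, p (j + i))) a
      = (l : ZMod 2) + psum p (a + l - 1) := by
  set π : ZMod 2 := (l : ZMod 2) + ∑ i ∈ Finset.range l, p (j + i) with hπ
  obtain ⟨t, rfl⟩ : ∃ t, a = j + 1 + t := ⟨a - j - 1, by omega⟩
  have e1 := psum_add (insP p j l π) (j + 1) t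
  have e2 := psum_add (insP p j l π) j 1
  have e3 : psum (insP p j l π) j = psum p j := psum_insP_le p j l j π le_rfl
  have e4 : insP p j l π j = π := by simp [insP]
  have e5 : ∀ i, insP p j l π (j + 1 + i) = p (j + l + i) := by
    intro i
    show (if j + 1 + i < j then p (j+1+i) else if j + 1 + i = j then π else p (j+1+i + l - 1)) = _
    rw [if_neg (by omega), if_neg (by omega)]
    exact congrArg p (by omega)
  have e6 := psum_add p (j + l) t
  have e7 := psum_add p j l
  rw [show j + 1 + t + l - 1 = j + l + t from by omega, e1, e2, e3,
    Finset.sum_range_one, Nat.add_zero, e4, Finset.sum_congr rfl (fun i _ => e5 i), e6, e7, hπ]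
  generalize psum p j = X
  generalize ∑ i ∈ Finset.range l, p (j + i) = Y
  generalize ∑ i ∈ Finset.range t, p (j + l + i) = Z
  generalize (l : ZMod 2) = L
  revert X Y Z L
  decide
end Aux
def phiArg (n k j : ℕ) (p : ℕ → ZMod 2) : ZMod 2 :=
  ((n + 1 - k : ℕ) : ZMod 2) * psum p j
    + (j : ZMod 2) * (((n + 1 - k : ℕ) : ZMod 2) - 1)
    + ((k : ZMod 2) - 1) * ((n + 1 - k : ℕ) : ZMod 2)

def recArg (m k : ℕ) (p : ℕ → ZMod 2) : ZMod 2 :=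
  (k : ZMod 2) + (((m - k : ℕ) : ZMod 2) - 1) * psum p k

def insV {A : Type*} [Ring A] (lam : ℕ → (ℕ → A) → (ℕ → ZMod 2) → A)
    (n k j : ℕ) (v : ℕ → A) (p : ℕ → ZMod 2) : ℕ → A :=
  insE v j (n + 1 - k) (lam (n + 1 - k) (fun i => v (j + i)) (fun i => p (j + i)))

def insQn (n k j : ℕ) (p : ℕ → ZMod 2) : ℕ → ZMod 2 :=
  insP p j (n + 1 - k)
    (((n + 1 - k : ℕ) : ZMod 2) + ∑ i ∈ Finset.range (n + 1 - k), p (j + i))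

section Main
variable {A : Type*} [Ring A]
variable (Q : A → A) (lam : ℕ → (ℕ → A) → (ℕ → ZMod 2) → A)

lemma Phi_eq (n : ℕ) (v : ℕ → A) (p : ℕ → ZMod 2) :
    Phi lam n v p = ∑ k ∈ Finset.Icc 2 (n - 1), ∑ j ∈ Finset.range k,
      sgn (phiArg n k j p) * lam k (insV lam n k j v p) (insQn n k j p) := rfl

lemma sgn_mul_left (s : ZMod 2) (x y : A) : x * (sgn s * y) = sgn s * (x * y) := by
  rcases sgn_cases (A := A) s with h | h <;> rw [h] <;>
    simp [neg_one_mul, mul_neg]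

lemma sgn_sgn (s t : ZMod 2) (x : A) : sgn s * (sgn t * x) = sgn (s + t) * x := by
  rw [sgn_add, mul_assoc]

variable (hlam2 : ∀ (v : ℕ → A) (p : ℕ → ZMod 2), lam 2 v p = v 0 * v 1)
variable (hlamrec : ∀ n, 3 ≤ n → ∀ (v : ℕ → A) (p : ℕ → ZMod 2),
      lam n v p =
        - ∑ k ∈ Finset.Icc 1 (n - 1),
            sgn ((k : ZMod 2) + (((n - k : ℕ) : ZMod 2) - 1) * psum p k) *
              (Qlam Q lam k v p *
                Qlam Q lam (n - k) (fun i => v (k + i)) (fun i => p (k + i))))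
variable (hQadd : ∀ x y : A, Q (x + y) = Q x + Q y)

include hQadd in
lemma Q_sum {α : Type*} (s : Finset α) (f : α → A) (h0 : Q 0 = 0) :
    Q (∑ x ∈ s, f x) = ∑ x ∈ s, Q (f x) :=
  map_sum (AddMonoidHom.mk' Q hQadd) f s

include hQadd in
lemma Q_sgn (h0 : Q 0 = 0) (s : ZMod 2) (x : A) : Q (sgn s * x) = sgn s * Q x := by
  have hneg : ∀ y : A, Q (-y) = -Q y := by
    intro y
    have h := hQadd y (-y)
    rw [add_neg_cancel, h0] at h
    exact (neg_eq_of_add_eq_zero_right h.symm).symm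
  rcases sgn_cases (A := A) s with h | h <;> rw [h] <;>
    simp [neg_one_mul, hneg]

include hlam2 hlamrec hQadd in
lemma inner_G (h0 : Q 0 = 0) (m : ℕ) (hm : 2 ≤ m) (vs : ℕ → A) (ps : ℕ → ZMod 2)
    (hPhi : Phi lam m vs ps = 0) :
    ∑ k ∈ Finset.Icc 1 (m - 1), ∑ j ∈ Finset.range k,
      sgn (phiArg m k j ps) *
        Qlam Q lam k (insV lam m k j vs ps) (insQn m k j ps)
      = -(lam m vs ps) := by
  rw [show Finset.Icc 1 (m - 1) = insert 1 (Finset.Icc 2 (m - 1)) from by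
        ext x; simp only [Finset.mem_Icc, Finset.mem_insert]; omega,
      Finset.sum_insert (by simp [Finset.mem_Icc]), Finset.sum_range_one]
  have h1 : phiArg m 1 0 ps = 0 := by
    simp [phiArg, psum]
  rw [h1, sgn_zero, one_mul, Qlam_one]
  have h2 : insV lam m 1 0 vs ps 0 = lam m vs ps := by
    have h : insV lam m 1 0 vs ps 0
        = lam (m + 1 - 1) (fun i => vs (0 + i)) (fun i => ps (0 + i)) := by
      simp [insV, insE]
    rw [h, show m + 1 - 1 = m from rfl]
    congr 1 <;> funext i <;> rw [Nat.zero_add]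
  rw [h2]
  have h3 : ∑ k ∈ Finset.Icc 2 (m - 1), ∑ j ∈ Finset.range k,
      sgn (phiArg m k j ps) *
        Qlam Q lam k (insV lam m k j vs ps) (insQn m k j ps)
      = Q (Phi lam m vs ps) := by
    rw [Phi_eq, Q_sum Q hQadd _ _ h0]
    refine Finset.sum_congr rfl fun k hk => ?_
    rw [Q_sum Q hQadd _ _ h0]
    refine Finset.sum_congr rfl fun j hj => ?_
    simp only [Finset.mem_Icc] at hk
    rw [Q_sgn Q hQadd h0, Qlam_ge2 Q lam k hk.1]
  rw [h3, hPhi, h0, add_zero]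

end Main
section TA
variable {A : Type*} [Ring A]
variable (Q : A → A) (lam : ℕ → (ℕ → A) → (ℕ → ZMod 2) → A)
variable (hlam2 : ∀ (v : ℕ → A) (p : ℕ → ZMod 2), lam 2 v p = v 0 * v 1)
variable (hlamrec : ∀ n, 3 ≤ n → ∀ (v : ℕ → A) (p : ℕ → ZMod 2),
      lam n v p =
        - ∑ k ∈ Finset.Icc 1 (n - 1),
            sgn ((k : ZMod 2) + (((n - k : ℕ) : ZMod 2) - 1) * psum p k) *
              (Qlam Q lam k v p *
                Qlam Q lam (n - k) (fun i => v (k + i)) (fun i => p (k + i))))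

include hlam2 hlamrec in
lemma TA_term (n k j a : ℕ) (hk : 2 ≤ k) (hk' : k ≤ n - 1) (hn : 3 ≤ n)
    (hj : j < k) (ha : 1 ≤ a) (haj : a ≤ j) (v : ℕ → A) (p : ℕ → ZMod 2) :
    sgn (phiArg n k j p) * (sgn (recArg k a (insQn n k j p)) *
      (Qlam Q lam a (insV lam n k j v p) (insQn n k j p) *
       Qlam Q lam (k - a) (fun i => insV lam n k j v p (a + i))
         (fun i => insQn n k j p (a + i))))
    = sgn (((n - a : ℕ) : ZMod 2) * psum p a) *
        (Qlam Q lam a v p *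
          (sgn (phiArg (n - a) (k - a) (j - a) (fun i => p (a + i))) *
            Qlam Q lam (k - a)
              (insV lam (n - a) (k - a) (j - a) (fun i => v (a + i)) (fun i => p (a + i)))
              (insQn (n - a) (k - a) (j - a) (fun i => p (a + i))))) := by
  have hl2 : 2 ≤ n + 1 - k := by omega
  -- left Qlam factor
  have hWa : Qlam Q lam a (insV lam n k j v p) (insQn n k j p) = Qlam Q lam a v p := by
    refine Qlam_ext Q lam hlam2 hlamrec a ha _ _ _ _ ?_ ?_
    · intro i hi
      simp [insV, insE, show i < j by omega]
    · intro i hi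
      simp [insQn, insP, show i < j by omega]
  -- shifted Qlam factor: tuples
  have hl : (n - a) + 1 - (k - a) = n + 1 - k := by omega
  have hshiftV : (fun i => insV lam n k j v p (a + i))
      = insV lam (n - a) (k - a) (j - a) (fun i => v (a + i)) (fun i => p (a + i)) := by
    simp only [insV, hl]
    have hblock : lam (n + 1 - k)
        (fun i => (fun t => v (a + t)) ((j - a) + i))
        (fun i => (fun t => p (a + t)) ((j - a) + i))
        = lam (n + 1 - k) (fun i => v (j + i)) (fun i => p (j + i)) := by
      congr 1 <;> funext i
      · exact congrArg v (by omega)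
      · exact congrArg p (by omega)
    rw [hblock]
    funext i
    simp only [insE]
    split_ifs <;> first | rfl | (exact congrArg v (by omega)) | omega
  have hshiftP : (fun i => insQn n k j p (a + i))
      = insQn (n - a) (k - a) (j - a) (fun i => p (a + i)) := by
    simp only [insQn, hl]
    have hq : (((n + 1 - k : ℕ) : ZMod 2)
          + ∑ i ∈ Finset.range (n + 1 - k), (fun t => p (a + t)) ((j - a) + i))
        = (((n + 1 - k : ℕ) : ZMod 2) + ∑ i ∈ Finset.range (n + 1 - k), p (j + i)) := by
      congr 1
      exact Finset.sum_congr rfl fun i _ => congrArg p (by omega)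
    rw [hq]
    funext i
    simp only [insP]
    split_ifs <;> first | rfl | (exact congrArg p (by omega)) | omega
  rw [hWa, hshiftV, hshiftP]
  conv_lhs => rw [sgn_sgn]
  conv_rhs => rw [sgn_mul_left, sgn_sgn]
  -- sign identity
  have earg : phiArg n k j p + recArg k a (insQn n k j p)
      = ((n - a : ℕ) : ZMod 2) * psum p a
        + phiArg (n - a) (k - a) (j - a) (fun i => p (a + i)) := by
    have hPq : psum (insQn n k j p) a = psum p a := by
      simp only [insQn]
      exact psum_insP_le p j (n + 1 - k) a _ haj
    have hpj : psum p j = psum p a + psum (fun i => p (a + i)) (j - a) := by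
      have h := psum_add p a (j - a)
      rw [show a + (j - a) = j from by omega] at h
      exact h
    have c_l : ((n + 1 - k : ℕ) : ZMod 2) = (n : ZMod 2) + 1 - (k : ZMod 2) := by
      rw [Nat.cast_sub (by omega)]
      push_cast
      ring
    have c_l2 : (((n - a) + 1 - (k - a) : ℕ) : ZMod 2) = (n : ZMod 2) + 1 - (k : ZMod 2) := by
      rw [show (n - a) + 1 - (k - a) = n + 1 - k from by omega, c_l]
    have c_ka : ((k - a : ℕ) : ZMod 2) = (k : ZMod 2) - (a : ZMod 2) := Nat.cast_sub (by omega)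
    have c_na : ((n - a : ℕ) : ZMod 2) = (n : ZMod 2) - (a : ZMod 2) := Nat.cast_sub (by omega)
    have c_ja : ((j - a : ℕ) : ZMod 2) = (j : ZMod 2) - (a : ZMod 2) := Nat.cast_sub (by omega)
    simp only [phiArg, recArg, hPq, hpj, c_l, c_l2, c_ka, c_na, c_ja]
    generalize (n : ZMod 2) = N
    generalize (k : ZMod 2) = K
    generalize (j : ZMod 2) = J
    generalize (a : ZMod 2) = Aa
    generalize psum p a = X
    generalize psum (fun i => p (a + i)) (j - a) = Y
    revert N K J Aa X Y
    decide
  rw [earg]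
end TA
section TB
variable {A : Type*} [Ring A]
variable (Q : A → A) (lam : ℕ → (ℕ → A) → (ℕ → ZMod 2) → A)
variable (hlam2 : ∀ (v : ℕ → A) (p : ℕ → ZMod 2), lam 2 v p = v 0 * v 1)
variable (hlamrec : ∀ n, 3 ≤ n → ∀ (v : ℕ → A) (p : ℕ → ZMod 2),
      lam n v p =
        - ∑ k ∈ Finset.Icc 1 (n - 1),
            sgn ((k : ZMod 2) + (((n - k : ℕ) : ZMod 2) - 1) * psum p k) *
              (Qlam Q lam k v p *
                Qlam Q lam (n - k) (fun i => v (k + i)) (fun i => p (k + i))))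

lemma TB_term (n k j a m : ℕ) (hk : 2 ≤ k) (hk' : k ≤ n - 1) (hn : 3 ≤ n)
    (hja : j < a) (hak : a ≤ k - 1) (hm : m = a + (n - k))
    (v : ℕ → A) (p : ℕ → ZMod 2) :
    sgn (phiArg n k j p) * (sgn (recArg k a (insQn n k j p)) *
      (Qlam Q lam a (insV lam n k j v p) (insQn n k j p) *
       Qlam Q lam (k - a) (fun i => insV lam n k j v p (a + i))
         (fun i => insQn n k j p (a + i))))
    = sgn ((m : ZMod 2) + 1 + (((n - m : ℕ) : ZMod 2) - 1) * psum p m) *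
        ((sgn (phiArg m a j p) *
            Qlam Q lam a (insV lam m a j v p) (insQn m a j p)) *
          Qlam Q lam (n - m) (fun i => v (m + i)) (fun i => p (m + i))) := by
  have hl2 : 2 ≤ n + 1 - k := by omega
  have hl : m + 1 - a = n + 1 - k := by omega
  have hka : k - a = n - m := by omega
  -- left factor identical
  have hleftV : insV lam m a j v p = insV lam n k j v p := by
    simp only [insV, hl]
  have hleftP : insQn m a j p = insQn n k j p := by
    simp only [insQn, hl]
  -- right factor is pure shift
  have hrightV : (fun i => insV lam n k j v p (a + i)) = (fun i => v (m + i)) := by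
    funext i
    simp only [insV, insE]
    rw [if_neg (by omega), if_neg (by omega)]
    exact congrArg v (by omega)
  have hrightP : (fun i => insQn n k j p (a + i)) = (fun i => p (m + i)) := by
    funext i
    simp only [insQn, insP]
    rw [if_neg (by omega), if_neg (by omega)]
    exact congrArg p (by omega)
  rw [hleftV, hleftP, hrightV, hrightP, hka]
  conv_lhs => rw [sgn_sgn]
  conv_rhs => rw [mul_assoc, ← sgn_mul_left, ← mul_assoc, ← mul_assoc]
  -- now RHS : ((sgn arg2 * sgn phiArg') * X) * Y ; LHS : sgn (phiArg + recArg) * (X * Y)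
  rw [← sgn_add, mul_assoc]
  -- sign identity
  have earg : phiArg n k j p + recArg k a (insQn n k j p)
      = ((m : ZMod 2) + 1 + (((n - m : ℕ) : ZMod 2) - 1) * psum p m) + phiArg m a j p := by
    have hPq : psum (insQn n k j p) a
        = ((n + 1 - k : ℕ) : ZMod 2) + psum p m := by
      simp only [insQn]
      rw [psum_insP_gt p j (n + 1 - k) a hja (by omega),
        show a + (n + 1 - k) - 1 = m from by omega]
    have c_l : ((n + 1 - k : ℕ) : ZMod 2) = (n : ZMod 2) + 1 - (k : ZMod 2) := by
      rw [Nat.cast_sub (by omega)]; push_cast; ring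
    have c_l2 : ((m + 1 - a : ℕ) : ZMod 2) = (n : ZMod 2) + 1 - (k : ZMod 2) := by
      rw [hl, c_l]
    have c_ka : ((k - a : ℕ) : ZMod 2) = (k : ZMod 2) - (a : ZMod 2) := Nat.cast_sub (by omega)
    have c_nm : ((n - m : ℕ) : ZMod 2) = (k : ZMod 2) - (a : ZMod 2) := by
      rw [show n - m = k - a from by omega, c_ka]
    have c_m : ((m : ℕ) : ZMod 2) = (a : ZMod 2) + ((n : ZMod 2) - (k : ZMod 2)) := by
      rw [hm, Nat.cast_add, Nat.cast_sub (by omega)]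
    simp only [phiArg, recArg, hPq, c_l, c_l2, c_ka, c_nm, c_m]
    generalize (n : ZMod 2) = N
    generalize (k : ZMod 2) = K
    generalize (j : ZMod 2) = J
    generalize (a : ZMod 2) = Aa
    generalize psum p j = X
    generalize psum p m = Z
    revert N K J Aa X Z
    decide
  rw [earg, add_comm (phiArg m a j p)]
end TB
section Cancel
variable {A : Type*} [Ring A]
variable (Q : A → A) (lam : ℕ → (ℕ → A) → (ℕ → ZMod 2) → A)

lemma cancel_term (n a b m : ℕ) (hn : 3 ≤ n) (ha : 1 ≤ a) (hb : 1 ≤ b)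
    (hab : a + b ≤ n - 1) (hm : m = a + b) (v : ℕ → A) (p : ℕ → ZMod 2) :
    sgn (((n - a : ℕ) : ZMod 2) * psum p a) *
      (Qlam Q lam a v p *
        (sgn (recArg (n - a) b (fun i => p (a + i))) *
          (Qlam Q lam b (fun i => v (a + i)) (fun i => p (a + i)) *
            Qlam Q lam (n - a - b) (fun i => v (a + (b + i))) (fun i => p (a + (b + i))))))
    = - (sgn ((m : ZMod 2) + 1 + (((n - m : ℕ) : ZMod 2) - 1) * psum p m) *
        ((sgn (recArg m a p) *
            (Qlam Q lam a v p *
              Qlam Q lam (m - a) (fun i => v (a + i)) (fun i => p (a + i)))) *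
          Qlam Q lam (n - m) (fun i => v (m + i)) (fun i => p (m + i)))) := by
  subst hm
  have h1 : n - a - b = n - (a + b) := by omega
  have h2 : (a + b) - a = b := by omega
  have h3 : (fun i => v (a + (b + i))) = (fun i => v ((a + b) + i)) := by
    funext i; exact congrArg v (by omega)
  have h4 : (fun i => p (a + (b + i))) = (fun i => p ((a + b) + i)) := by
    funext i; exact congrArg p (by omega)
  rw [h1, h2, h3, h4]
  conv_lhs => rw [sgn_mul_left, sgn_sgn, ← mul_assoc (Qlam Q lam a v p)]
  conv_rhs => rw [mul_assoc (sgn (recArg (a + b) a p)), sgn_sgn]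
  rw [mul_assoc]
  -- goal : sgn E1 * M = -(sgn E2 * M)
  have earg : ((n - a : ℕ) : ZMod 2) * psum p a + recArg (n - a) b (fun i => p (a + i))
      = (((a + b : ℕ) : ZMod 2) + 1 + (((n - (a + b) : ℕ) : ZMod 2) - 1) * psum p (a + b)
          + recArg (a + b) a p) + 1 := by
    have hY : psum p (a + b) = psum p a + psum (fun i => p (a + i)) b := by
      rw [psum_add]; rfl
    have c1 : ((n - a : ℕ) : ZMod 2) = (n : ZMod 2) - (a : ZMod 2) := Nat.cast_sub (by omega)
    have c2 : ((n - a - b : ℕ) : ZMod 2) = (n : ZMod 2) - (a : ZMod 2) - (b : ZMod 2) := by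
      rw [show n - a - b = n - (a + b) from by omega, Nat.cast_sub (by omega)]
      push_cast; ring
    have c3 : ((n - (a + b) : ℕ) : ZMod 2) = (n : ZMod 2) - (a : ZMod 2) - (b : ZMod 2) := by
      rw [Nat.cast_sub (by omega)]; push_cast; ring
    have c4 : ((a + b - a : ℕ) : ZMod 2) = (b : ZMod 2) := by
      rw [show a + b - a = b from by omega]
    have c5 : ((a + b : ℕ) : ZMod 2) = (a : ZMod 2) + (b : ZMod 2) := by push_cast; ring
    simp only [recArg, hY, c1, c2, c3, c4, c5]
    generalize (n : ZMod 2) = N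
    generalize (a : ZMod 2) = Aa
    generalize (b : ZMod 2) = B
    generalize psum p a = X
    generalize psum (fun i => p (a + i)) b = Y
    revert N Aa B X Y
    decide
  rw [earg, sgn_add, sgn_one, mul_neg_one, neg_mul]
end Cancel
def Fterm {A : Type*} [Ring A] (Q : A → A) (lam : ℕ → (ℕ → A) → (ℕ → ZMod 2) → A)
    (n : ℕ) (v : ℕ → A) (p : ℕ → ZMod 2) (k j a : ℕ) : A :=
  sgn (phiArg n k j p) * (sgn (recArg k a (insQn n k j p)) *
    (Qlam Q lam a (insV lam n k j v p) (insQn n k j p) *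
     Qlam Q lam (k - a) (fun i => insV lam n k j v p (a + i))
       (fun i => insQn n k j p (a + i))))

def Gterm {A : Type*} [Ring A] (Q : A → A) (lam : ℕ → (ℕ → A) → (ℕ → ZMod 2) → A)
    (n : ℕ) (v : ℕ → A) (p : ℕ → ZMod 2) (a k' j' : ℕ) : A :=
  sgn (((n - a : ℕ) : ZMod 2) * psum p a) *
    (Qlam Q lam a v p *
      (sgn (phiArg (n - a) k' j' (fun i => p (a + i))) *
        Qlam Q lam k'
          (insV lam (n - a) k' j' (fun i => v (a + i)) (fun i => p (a + i)))
          (insQn (n - a) k' j' (fun i => p (a + i)))))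

def Hterm {A : Type*} [Ring A] (Q : A → A) (lam : ℕ → (ℕ → A) → (ℕ → ZMod 2) → A)
    (n : ℕ) (v : ℕ → A) (p : ℕ → ZMod 2) (m a j : ℕ) : A :=
  sgn ((m : ZMod 2) + 1 + (((n - m : ℕ) : ZMod 2) - 1) * psum p m) *
    ((sgn (phiArg m a j p) *
        Qlam Q lam a (insV lam m a j v p) (insQn m a j p)) *
      Qlam Q lam (n - m) (fun i => v (m + i)) (fun i => p (m + i)))
section SumBij
variable {M : Type*} [AddCommMonoid M]

lemma sum3_A (n : ℕ) (F G : ℕ → ℕ → ℕ → M)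
    (hFG : ∀ k j a, 2 ≤ k → k ≤ n - 1 → j < k → 1 ≤ a → a ≤ j →
      F k j a = G a (k - a) (j - a)) :
    ∑ k ∈ Finset.Icc 2 (n - 1), ∑ j ∈ Finset.range k, ∑ a ∈ Finset.Ioc 0 j, F k j a
    = ∑ a ∈ Finset.Icc 1 (n - 2), ∑ k' ∈ Finset.Icc 1 (n - a - 1),
        ∑ j' ∈ Finset.range k', G a k' j' := by
  have h1 : ∑ k ∈ Finset.Icc 2 (n - 1), ∑ j ∈ Finset.range k, ∑ a ∈ Finset.Ioc 0 j, F k j a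
      = ∑ y ∈ (Finset.Icc 2 (n - 1)).sigma
            (fun k => (Finset.range k).sigma fun j => Finset.Ioc 0 j),
          F y.1 y.2.1 y.2.2 := by
    refine Eq.trans ?_ (Finset.sum_sigma' (Finset.Icc 2 (n - 1)) _
      (fun (k : ℕ) (x : (j : ℕ) × ℕ) => F k x.1 x.2))
    exact Finset.sum_congr rfl fun k _ => Finset.sum_sigma' _ _ _
  have h2 : ∑ a ∈ Finset.Icc 1 (n - 2), ∑ k' ∈ Finset.Icc 1 (n - a - 1),
        ∑ j' ∈ Finset.range k', G a k' j'
      = ∑ z ∈ (Finset.Icc 1 (n - 2)).sigma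
            (fun a => (Finset.Icc 1 (n - a - 1)).sigma fun k' => Finset.range k'),
          G z.1 z.2.1 z.2.2 := by
    refine Eq.trans ?_ (Finset.sum_sigma' (Finset.Icc 1 (n - 2)) _
      (fun (a : ℕ) (x : (k' : ℕ) × ℕ) => G a x.1 x.2))
    exact Finset.sum_congr rfl fun a _ => Finset.sum_sigma' _ _ _
  rw [h1, h2]
  refine Finset.sum_bij'
    (fun (y : (k : ℕ) × (j : ℕ) × ℕ) _ =>
      (⟨y.2.2, y.1 - y.2.2, y.2.1 - y.2.2⟩ : (a : ℕ) × (k' : ℕ) × ℕ))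
    (fun (z : (a : ℕ) × (k' : ℕ) × ℕ) _ =>
      (⟨z.1 + z.2.1, z.1 + z.2.2, z.1⟩ : (k : ℕ) × (j : ℕ) × ℕ))
    ?_ ?_ ?_ ?_ ?_ <;>
    intro y hy <;>
    obtain ⟨x1, x2, x3⟩ := y <;>
    simp only [Finset.mem_sigma, Finset.mem_Icc, Finset.mem_range, Finset.mem_Ioc] at hy ⊢
  · omega
  · omega
  · rw [show x3 + (x1 - x3) = x1 from by omega, show x3 + (x2 - x3) = x2 from by omega]
  · rw [show x1 + x2 - x1 = x2 from by omega, show x1 + x3 - x1 = x3 from by omega]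
  · exact hFG x1 x2 x3 hy.1.1 hy.1.2 hy.2.1 (by omega) (by omega)

lemma sum3_B (n : ℕ) (F H : ℕ → ℕ → ℕ → M)
    (hFH : ∀ k j a, 2 ≤ k → k ≤ n - 1 → j < k → j < a → a ≤ k - 1 →
      F k j a = H (a + (n - k)) a j) :
    ∑ k ∈ Finset.Icc 2 (n - 1), ∑ j ∈ Finset.range k, ∑ a ∈ Finset.Ioc j (k - 1), F k j a
    = ∑ m ∈ Finset.Icc 2 (n - 1), ∑ a ∈ Finset.Icc 1 (m - 1),
        ∑ j ∈ Finset.range a, H m a j := by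
  have h1 : ∑ k ∈ Finset.Icc 2 (n - 1), ∑ j ∈ Finset.range k, ∑ a ∈ Finset.Ioc j (k - 1), F k j a
      = ∑ y ∈ (Finset.Icc 2 (n - 1)).sigma
            (fun k => (Finset.range k).sigma fun j => Finset.Ioc j (k - 1)),
          F y.1 y.2.1 y.2.2 := by
    refine Eq.trans ?_ (Finset.sum_sigma' (Finset.Icc 2 (n - 1)) _
      (fun (k : ℕ) (x : (j : ℕ) × ℕ) => F k x.1 x.2))
    exact Finset.sum_congr rfl fun k _ => Finset.sum_sigma' _ _ _
  have h2 : ∑ m ∈ Finset.Icc 2 (n - 1), ∑ a ∈ Finset.Icc 1 (m - 1),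
        ∑ j ∈ Finset.range a, H m a j
      = ∑ z ∈ (Finset.Icc 2 (n - 1)).sigma
            (fun m => (Finset.Icc 1 (m - 1)).sigma fun a => Finset.range a),
          H z.1 z.2.1 z.2.2 := by
    refine Eq.trans ?_ (Finset.sum_sigma' (Finset.Icc 2 (n - 1)) _
      (fun (m : ℕ) (x : (a : ℕ) × ℕ) => H m x.1 x.2))
    exact Finset.sum_congr rfl fun m _ => Finset.sum_sigma' _ _ _
  rw [h1, h2]
  refine Finset.sum_bij'
    (fun (y : (k : ℕ) × (j : ℕ) × ℕ) _ =>
      (⟨y.2.2 + (n - y.1), y.2.2, y.2.1⟩ : (m : ℕ) × (a : ℕ) × ℕ))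
    (fun (z : (m : ℕ) × (a : ℕ) × ℕ) _ =>
      (⟨z.2.1 + (n - z.1), z.2.2, z.2.1⟩ : (k : ℕ) × (j : ℕ) × ℕ))
    ?_ ?_ ?_ ?_ ?_ <;>
    intro y hy <;>
    obtain ⟨x1, x2, x3⟩ := y <;>
    simp only [Finset.mem_sigma, Finset.mem_Icc, Finset.mem_range, Finset.mem_Ioc] at hy ⊢
  · omega
  · omega
  · rw [show x3 + (n - (x3 + (n - x1))) = x1 from by omega]
  · rw [show x2 + (n - (x2 + (n - x1))) = x1 from by omega]
  · exact hFH x1 x2 x3 hy.1.1 hy.1.2 hy.2.1 hy.2.2.1 hy.2.2.2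
end SumBij

section Bij2
variable {A : Type*} [Ring A]
variable (Q : A → A) (lam : ℕ → (ℕ → A) → (ℕ → ZMod 2) → A)
variable (hlam2 : ∀ (v : ℕ → A) (p : ℕ → ZMod 2), lam 2 v p = v 0 * v 1)
variable (hlamrec : ∀ n, 3 ≤ n → ∀ (v : ℕ → A) (p : ℕ → ZMod 2),
      lam n v p =
        - ∑ k ∈ Finset.Icc 1 (n - 1),
            sgn ((k : ZMod 2) + (((n - k : ℕ) : ZMod 2) - 1) * psum p k) *
              (Qlam Q lam k v p *
                Qlam Q lam (n - k) (fun i => v (k + i)) (fun i => p (k + i))))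

include hlam2 hlamrec in
lemma TA_bij (n : ℕ) (hn : 3 ≤ n) (v : ℕ → A) (p : ℕ → ZMod 2) :
    ∑ k ∈ Finset.Icc 2 (n - 1), ∑ j ∈ Finset.range k, ∑ a ∈ Finset.Ioc 0 j,
      Fterm Q lam n v p k j a
    = ∑ a ∈ Finset.Icc 1 (n - 2), ∑ k' ∈ Finset.Icc 1 (n - a - 1),
        ∑ j' ∈ Finset.range k', Gterm Q lam n v p a k' j' := by
  refine sum3_A n _ _ fun k j a hk hk' hj ha haj => ?_
  simp only [Fterm, Gterm]
  exact TA_term Q lam hlam2 hlamrec n k j a hk hk' hn hj ha haj v p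

lemma TB_bij (n : ℕ) (hn : 3 ≤ n) (v : ℕ → A) (p : ℕ → ZMod 2) :
    ∑ k ∈ Finset.Icc 2 (n - 1), ∑ j ∈ Finset.range k, ∑ a ∈ Finset.Ioc j (k - 1),
      Fterm Q lam n v p k j a
    = ∑ m ∈ Finset.Icc 2 (n - 1), ∑ a ∈ Finset.Icc 1 (m - 1),
        ∑ j ∈ Finset.range a, Hterm Q lam n v p m a j := by
  refine sum3_B n _ _ fun k j a hk hk' hj hja hak => ?_
  simp only [Fterm, Hterm]
  exact TB_term Q lam n k j a (a + (n - k)) hk hk' hn hja hak rfl v p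
end Bij2
section SumCancel
variable {M : Type*} [AddCommGroup M]

lemma sum2_cancel (n : ℕ) (L R : ℕ → ℕ → M)
    (hLR : ∀ a b, 1 ≤ a → 1 ≤ b → a + b ≤ n - 1 → L a b = - R (a + b) a) :
    ∑ a ∈ Finset.Icc 1 (n - 2), ∑ b ∈ Finset.Icc 1 (n - a - 1), L a b
    = - ∑ m ∈ Finset.Icc 2 (n - 1), ∑ c ∈ Finset.Icc 1 (m - 1), R m c := by
  have h1 : ∑ a ∈ Finset.Icc 1 (n - 2), ∑ b ∈ Finset.Icc 1 (n - a - 1), L a b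
      = ∑ y ∈ (Finset.Icc 1 (n - 2)).sigma (fun a => Finset.Icc 1 (n - a - 1)),
          L y.1 y.2 := Finset.sum_sigma' _ _ _
  have h2 : ∑ m ∈ Finset.Icc 2 (n - 1), ∑ c ∈ Finset.Icc 1 (m - 1), - R m c
      = ∑ z ∈ (Finset.Icc 2 (n - 1)).sigma (fun m => Finset.Icc 1 (m - 1)),
          - R z.1 z.2 := Finset.sum_sigma' _ _ _
  have h3 : - ∑ m ∈ Finset.Icc 2 (n - 1), ∑ c ∈ Finset.Icc 1 (m - 1), R m c
      = ∑ m ∈ Finset.Icc 2 (n - 1), ∑ c ∈ Finset.Icc 1 (m - 1), - R m c := by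
    simp [Finset.sum_neg_distrib]
  rw [h1, h3, h2]
  refine Finset.sum_bij'
    (fun (y : (a : ℕ) × ℕ) _ => ((⟨y.1 + y.2, y.1⟩ : (m : ℕ) × ℕ)))
    (fun (z : (m : ℕ) × ℕ) _ => ((⟨z.2, z.1 - z.2⟩ : (a : ℕ) × ℕ)))
    ?_ ?_ ?_ ?_ ?_ <;>
    intro y hy <;>
    obtain ⟨x1, x2⟩ := y <;>
    simp only [Finset.mem_sigma, Finset.mem_Icc] at hy ⊢
  · omega
  · omega
  · rw [show x1 + x2 - x1 = x2 from by omega]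
  · rw [show x2 + (x1 - x2) = x1 from by omega]
  · exact hLR x1 x2 hy.1.1 hy.2.1 (by omega)
end SumCancel

def Lterm {A : Type*} [Ring A] (Q : A → A) (lam : ℕ → (ℕ → A) → (ℕ → ZMod 2) → A)
    (n : ℕ) (v : ℕ → A) (p : ℕ → ZMod 2) (a b : ℕ) : A :=
  sgn (((n - a : ℕ) : ZMod 2) * psum p a) *
    (Qlam Q lam a v p *
      (sgn (recArg (n - a) b (fun i => p (a + i))) *
        (Qlam Q lam b (fun i => v (a + i)) (fun i => p (a + i)) *
          Qlam Q lam (n - a - b) (fun i => v (a + (b + i))) (fun i => p (a + (b + i))))))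

def Rterm {A : Type*} [Ring A] (Q : A → A) (lam : ℕ → (ℕ → A) → (ℕ → ZMod 2) → A)
    (n : ℕ) (v : ℕ → A) (p : ℕ → ZMod 2) (m c : ℕ) : A :=
  sgn ((m : ZMod 2) + 1 + (((n - m : ℕ) : ZMod 2) - 1) * psum p m) *
    ((sgn (recArg m c p) *
        (Qlam Q lam c v p *
          Qlam Q lam (m - c) (fun i => v (c + i)) (fun i => p (c + i)))) *
      Qlam Q lam (n - m) (fun i => v (m + i)) (fun i => p (m + i)))

section MainGen
variable {A : Type*} [Ring A]
variable (Q : A → A) (lam : ℕ → (ℕ → A) → (ℕ → ZMod 2) → A)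
variable (hlam2 : ∀ (v : ℕ → A) (p : ℕ → ZMod 2), lam 2 v p = v 0 * v 1)
variable (hlamrec : ∀ n, 3 ≤ n → ∀ (v : ℕ → A) (p : ℕ → ZMod 2),
      lam n v p =
        - ∑ k ∈ Finset.Icc 1 (n - 1),
            sgn ((k : ZMod 2) + (((n - k : ℕ) : ZMod 2) - 1) * psum p k) *
              (Qlam Q lam k v p *
                Qlam Q lam (n - k) (fun i => v (k + i)) (fun i => p (k + i))))
variable (hQadd : ∀ x y : A, Q (x + y) = Q x + Q y)

include hlam2 hlamrec in
lemma LR_cancel (n a b : ℕ) (hn : 3 ≤ n) (ha : 1 ≤ a) (hb : 1 ≤ b)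
    (hab : a + b ≤ n - 1) (v : ℕ → A) (p : ℕ → ZMod 2) :
    Lterm Q lam n v p a b = - Rterm Q lam n v p (a + b) a := by
  simp only [Lterm, Rterm]
  exact cancel_term Q lam n a b (a + b) hn ha hb hab rfl v p

include hlam2 hlamrec hQadd in
lemma Phi_zero_gen (h0 : Q 0 = 0) :
    ∀ n, 3 ≤ n → ∀ (v : ℕ → A) (p : ℕ → ZMod 2), Phi lam n v p = 0 := by
  intro n
  induction n using Nat.strong_induction_on with
  | _ n IH =>
  intro hn v p
  have hPhi0 : ∀ m, 2 ≤ m → m < n → ∀ (vs : ℕ → A) (ps : ℕ → ZMod 2),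
      Phi lam m vs ps = 0 := by
    intro m hm hmn vs ps
    rcases lt_or_ge m 3 with h | h
    · have hm2 : m = 2 := by omega
      subst hm2
      rw [Phi_eq, show Finset.Icc 2 (2 - 1) = (∅ : Finset ℕ) from rfl,
        Finset.sum_empty]
    · exact IH m hmn h vs ps
  -- Step 1 : expand the outer lam
  have e1 : Phi lam n v p
      = - ∑ k ∈ Finset.Icc 2 (n - 1), ∑ j ∈ Finset.range k,
          ∑ a ∈ Finset.Icc 1 (k - 1), Fterm Q lam n v p k j a := by
    rw [Phi_eq, ← Finset.sum_neg_distrib]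
    refine Finset.sum_congr rfl fun k hk => ?_
    rw [← Finset.sum_neg_distrib]
    refine Finset.sum_congr rfl fun j hj => ?_
    simp only [Finset.mem_Icc] at hk
    rw [lam_rec2 Q lam hlam2 hlamrec k hk.1, mul_neg]
    congr 1
    rw [Finset.mul_sum]
    exact Finset.sum_congr rfl fun a _ => rfl
  -- Step 2 : split the a-sum
  have e2 : Phi lam n v p
      = - ((∑ k ∈ Finset.Icc 2 (n - 1), ∑ j ∈ Finset.range k,
            ∑ a ∈ Finset.Ioc 0 j, Fterm Q lam n v p k j a)
          + (∑ k ∈ Finset.Icc 2 (n - 1), ∑ j ∈ Finset.range k,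
            ∑ a ∈ Finset.Ioc j (k - 1), Fterm Q lam n v p k j a)) := by
    rw [e1, ← Finset.sum_add_distrib]
    congr 1
    refine Finset.sum_congr rfl fun k hk => ?_
    rw [← Finset.sum_add_distrib]
    refine Finset.sum_congr rfl fun j hj => ?_
    simp only [Finset.mem_Icc] at hk
    simp only [Finset.mem_range] at hj
    rw [show Finset.Icc 1 (k - 1) = Finset.Ioc 0 (k - 1) from by
      rw [← Finset.Icc_add_one_left_eq_Ioc, Nat.zero_add]]
    exact (Finset.sum_Ioc_consecutive _ (Nat.zero_le j) (by omega)).symm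
  rw [e2, TA_bij Q lam hlam2 hlamrec n hn v p, TB_bij Q lam n hn v p]
  -- Step 3 : collapse inner sums via inner_G
  have e4 : ∑ a ∈ Finset.Icc 1 (n - 2), ∑ k' ∈ Finset.Icc 1 (n - a - 1),
        ∑ j' ∈ Finset.range k', Gterm Q lam n v p a k' j'
      = ∑ a ∈ Finset.Icc 1 (n - 2),
          sgn (((n - a : ℕ) : ZMod 2) * psum p a) *
            (Qlam Q lam a v p *
              -(lam (n - a) (fun i => v (a + i)) (fun i => p (a + i)))) := by
    refine Finset.sum_congr rfl fun a ha => ?_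
    simp only [Finset.mem_Icc] at ha
    rw [← inner_G Q lam hlam2 hlamrec hQadd h0 (n - a) (by omega) _ _
      (hPhi0 (n - a) (by omega) (by omega) _ _)]
    simp only [Finset.mul_sum, Gterm]
  have e5 : ∑ m ∈ Finset.Icc 2 (n - 1), ∑ a ∈ Finset.Icc 1 (m - 1),
        ∑ j ∈ Finset.range a, Hterm Q lam n v p m a j
      = ∑ m ∈ Finset.Icc 2 (n - 1),
          sgn ((m : ZMod 2) + 1 + (((n - m : ℕ) : ZMod 2) - 1) * psum p m) *
            (-(lam m v p) *
              Qlam Q lam (n - m) (fun i => v (m + i)) (fun i => p (m + i))) := by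
    refine Finset.sum_congr rfl fun m hm => ?_
    simp only [Finset.mem_Icc] at hm
    rw [← inner_G Q lam hlam2 hlamrec hQadd h0 m hm.1 v p
      (hPhi0 m hm.1 (by omega) v p)]
    simp only [Finset.sum_mul, Finset.mul_sum, Hterm]
  rw [e4, e5]
  simp only [mul_neg, neg_mul, Finset.sum_neg_distrib, neg_add, neg_neg]
  -- Now : SA + SB with positive lam terms
  have e6 : ∑ a ∈ Finset.Icc 1 (n - 2),
        sgn (((n - a : ℕ) : ZMod 2) * psum p a) *
          (Qlam Q lam a v p * lam (n - a) (fun i => v (a + i)) (fun i => p (a + i)))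
      = - ∑ a ∈ Finset.Icc 1 (n - 2), ∑ b ∈ Finset.Icc 1 (n - a - 1),
          Lterm Q lam n v p a b := by
    rw [← Finset.sum_neg_distrib]
    refine Finset.sum_congr rfl fun a ha => ?_
    simp only [Finset.mem_Icc] at ha
    rw [lam_rec2 Q lam hlam2 hlamrec (n - a) (by omega), mul_neg, mul_neg]
    congr 1
    rw [Finset.mul_sum, Finset.mul_sum]
    refine Finset.sum_congr rfl fun b _ => ?_
    rfl
  have e7 : ∑ m ∈ Finset.Icc 2 (n - 1),
        sgn ((m : ZMod 2) + 1 + (((n - m : ℕ) : ZMod 2) - 1) * psum p m) *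
          (lam m v p *
            Qlam Q lam (n - m) (fun i => v (m + i)) (fun i => p (m + i)))
      = - ∑ m ∈ Finset.Icc 2 (n - 1), ∑ c ∈ Finset.Icc 1 (m - 1),
          Rterm Q lam n v p m c := by
    rw [← Finset.sum_neg_distrib]
    refine Finset.sum_congr rfl fun m hm => ?_
    simp only [Finset.mem_Icc] at hm
    rw [lam_rec2 Q lam hlam2 hlamrec m hm.1, neg_mul, mul_neg]
    congr 1
    rw [Finset.sum_mul, Finset.mul_sum]
    refine Finset.sum_congr rfl fun c _ => ?_
    rfl
  rw [e6, e7, sum2_cancel n _ _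
    (fun a b ha hb hab => LR_cancel Q lam hlam2 hlamrec n a b hn ha hb hab v p)]
  simp
end MainGen

/-- Lemma 1 of Merkulov, "Strong homotopy algebras of a Kähler
manifold": for every `n ≥ 3` and all homogeneous `v₁, …, v_n ∈ V`,
`Φ_n(v₁,…,v_n) = 0`. -/
theorem phi_eq_zero {K A : Type*} [Field K] [Ring A] [Algebra K A]
    -- `A` is a superalgebra over `K`: a ℤ/2-graded associative algebra
    (𝒜 : ZMod 2 → Submodule K A) [GradedAlgebra 𝒜]
    -- `Q` is an odd linear operator
    (Q : A →ₗ[K] A)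
    (hQ : ∀ (i : ZMod 2), ∀ x ∈ 𝒜 i, Q x ∈ 𝒜 (i + 1))
    -- `λ₂(v₁,v₂) = v₁·v₂` and, recursively, `λ_n(v₁,…,v_n) =
    -- -∑ (-1)^{k+(l-1)(|v₁|+⋯+|v_k|)} [Qλ_k(v₁,…,v_k)]·[Qλ_l(v_{k+1},…,v_n)]`
    -- for `n ≥ 3`, with `Qλ₁ := -Id`; here the sum runs over all splittings
    -- `(v₁,…,v_k), (v_{k+1},…,v_n)` with `k, l ≥ 1` (so `l = n - k`, matching
    -- the arities in the paper's explicit formulae for `λ₃, λ₄, λ₅`)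
    (lam : ℕ → (ℕ → A) → (ℕ → ZMod 2) → A)
    (hlam2 : ∀ (v : ℕ → A) (p : ℕ → ZMod 2), lam 2 v p = v 0 * v 1)
    (hlamrec : ∀ n, 3 ≤ n → ∀ (v : ℕ → A) (p : ℕ → ZMod 2),
      lam n v p =
        - ∑ k ∈ Finset.Icc 1 (n - 1),
            sgn ((k : ZMod 2) + (((n - k : ℕ) : ZMod 2) - 1) * psum p k) *
              (Qlam (⇑Q) lam k v p *
                Qlam (⇑Q) lam (n - k) (fun i => v (k + i)) (fun i => p (k + i))))
    (n : ℕ) (hn : 3 ≤ n) (v : ℕ → A) (p : ℕ → ZMod 2)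
    -- `v₁, …, v_n` are homogeneous, `v_i` of parity `p_i`
    (hv : ∀ i < n, v i ∈ 𝒜 (p i)) :
    Phi lam n v p = 0 := by
  exact Phi_zero_gen (⇑Q) lam hlam2 hlamrec (fun x y => map_add Q x y)
    (map_zero Q) n hn v p
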